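/- The map Φ : (0,1] × ℝ → (ℤ[X] → ℝ) defined by Φ(υ, t)(P) = |P(t)|^υ (where |·| is the Euclidean absolute value and P(t) is the evaluation of the integer polynomial P at t) is a topological embedding of (0,1] × ℝ (with the product topology) into the product space ℤ[X] → ℝ with the topology of pointwise convergence; that is, Φ is injective, continuous, and a homeomorphism onto its image. In particular, the union of the images in 𝔸¹_ℤ of the complete valuation fields ℝ_υ for υ ∈ (0,1] is homeomorphic to (0,1] × ℝ. -/

import Mathlib

open Polynomial Real Filter Topology Set

noncomputable def PhiAux : Set.Ioc (0 : ℝ) 1 × ℝ → Polynomial ℤ → ℝ :=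
  fun q P => |(Polynomial.aeval q.2 P : ℝ)| ^ (q.1 : ℝ)

lemma phiAux_two (q : Set.Ioc (0 : ℝ) 1 × ℝ) : PhiAux q 2 = (2 : ℝ) ^ (q.1 : ℝ) := by
  simp [PhiAux, map_ofNat]

lemma phiAux_X (q : Set.Ioc (0 : ℝ) 1 × ℝ) : PhiAux q X = |q.2| ^ (q.1 : ℝ) := by
  simp [PhiAux]

lemma phiAux_X1 (q : Set.Ioc (0 : ℝ) 1 × ℝ) : PhiAux q (X + 1) = |q.2 + 1| ^ (q.1 : ℝ) := by
  simp [PhiAux]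

lemma phiAux_inj : Function.Injective PhiAux := by
  rintro ⟨⟨a, ha⟩, s⟩ ⟨⟨b, hb⟩, t⟩ h
  have h2 := congrFun h 2
  have hX := congrFun h X
  have hX1 := congrFun h (X + 1)
  rw [phiAux_two, phiAux_two] at h2
  rw [phiAux_X, phiAux_X] at hX
  rw [phiAux_X1, phiAux_X1] at hX1
  simp only at h2 hX hX1
  have hlog : Real.log 2 ≠ 0 := ne_of_gt (Real.log_pos (by norm_num))
  have hab : a = b := by
    have := congrArg Real.log h2
    rw [Real.log_rpow (by norm_num), Real.log_rpow (by norm_num)] at this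
    exact mul_right_cancel₀ hlog this
  subst hab
  have habs : ∀ x y : ℝ, |x| ^ a = |y| ^ a → |x| = |y| := by
    intro x y hxy
    exact Real.rpow_left_injOn (x := a) ha.1.ne'
      (show |x| ∈ {z : ℝ | 0 ≤ z} from abs_nonneg x)
      (show |y| ∈ {z : ℝ | 0 ≤ z} from abs_nonneg y) hxy
  have hst : |s| = |t| := habs s t hX
  have hst1 : |s + 1| = |t + 1| := habs (s + 1) (t + 1) hX1
  have h1 : s ^ 2 = t ^ 2 := by rw [← sq_abs, ← sq_abs t, hst]
  have h2' : (s + 1) ^ 2 = (t + 1) ^ 2 := by rw [← sq_abs, ← sq_abs (t + 1), hst1]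
  have : s = t := by nlinarith
  simp [this]

lemma phiAux_cont : Continuous PhiAux := by
  apply continuous_pi
  intro P
  rw [continuous_iff_continuousAt]
  intro q
  exact ContinuousAt.rpow
    ((continuous_abs.comp ((P.continuous_aeval).comp continuous_snd)).continuousAt)
    ((continuous_subtype_val.comp continuous_fst).continuousAt)
    (Or.inr q.1.2.1)

noncomputable def GAux : (Polynomial ℤ → ℝ) → ℝ × ℝ :=
  fun f => (Real.logb 2 (f 2),
    (f (X + 1) ^ (2 / Real.logb 2 (f 2)) - f X ^ (2 / Real.logb 2 (f 2)) - 1) / 2)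

lemma GAux_comp (q : Set.Ioc (0 : ℝ) 1 × ℝ) : GAux (PhiAux q) = ((q.1 : ℝ), q.2) := by
  obtain ⟨⟨a, ha⟩, t⟩ := q
  have ha0 : a ≠ 0 := ne_of_gt ha.1
  simp only [GAux, phiAux_two, phiAux_X, phiAux_X1]
  rw [Real.logb_rpow (by norm_num) (by norm_num)]
  rw [← Real.rpow_mul (abs_nonneg (t + 1)), ← Real.rpow_mul (abs_nonneg t)]
  have hm : a * (2 / a) = 2 := by field_simp
  rw [hm, Real.rpow_two, Real.rpow_two, sq_abs, sq_abs]
  have hr : ((t + 1) ^ 2 - t ^ 2 - 1) / 2 = t := by ring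
  rw [hr]

lemma GAux_contAt (q : Set.Ioc (0 : ℝ) 1 × ℝ) : ContinuousAt GAux (PhiAux q) := by
  have h2 : PhiAux q 2 = (2 : ℝ) ^ (q.1 : ℝ) := phiAux_two q
  have hpos : 0 < PhiAux q 2 := by rw [h2]; positivity
  have hlogb : Real.logb 2 (PhiAux q 2) = (q.1 : ℝ) := by
    rw [h2, Real.logb_rpow (by norm_num) (by norm_num)]
  have hc1 : ContinuousAt (fun f : Polynomial ℤ → ℝ => Real.logb 2 (f 2)) (PhiAux q) :=
    ContinuousAt.comp (g := Real.logb 2) (Real.continuousAt_logb (ne_of_gt hpos))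
      ((continuous_apply (2 : Polynomial ℤ)).continuousAt)
  have hexp : ContinuousAt (fun f : Polynomial ℤ → ℝ => 2 / Real.logb 2 (f 2)) (PhiAux q) := by
    apply ContinuousAt.div continuousAt_const hc1
    rw [hlogb]; exact ne_of_gt q.1.2.1
  have hexp_pos : 0 < 2 / Real.logb 2 (PhiAux q 2) := by
    rw [hlogb]; exact div_pos two_pos q.1.2.1
  have hb1 : ContinuousAt
      (fun f : Polynomial ℤ → ℝ => f (X + 1) ^ (2 / Real.logb 2 (f 2))) (PhiAux q) :=
    ContinuousAt.rpow (continuous_apply (X + 1 : Polynomial ℤ)).continuousAt hexp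
      (Or.inr hexp_pos)
  have hb2 : ContinuousAt
      (fun f : Polynomial ℤ → ℝ => f X ^ (2 / Real.logb 2 (f 2))) (PhiAux q) :=
    ContinuousAt.rpow (continuous_apply (X : Polynomial ℤ)).continuousAt hexp
      (Or.inr hexp_pos)
  exact hc1.prodMk (((hb1.sub hb2).sub continuousAt_const).div continuousAt_const (by norm_num : (2:ℝ) ≠ 0))

lemma phiAux_emb : Topology.IsEmbedding PhiAux := by
  refine ⟨isInducing_iff_nhds.2 fun q => le_antisymm ?_ ?_, phiAux_inj⟩
  · exact tendsto_iff_comap.1 phiAux_cont.continuousAt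
  · have hι : Topology.IsInducing (fun q : Set.Ioc (0 : ℝ) 1 × ℝ => ((q.1 : ℝ), q.2)) := by
      have := (Topology.IsEmbedding.subtypeVal (p := fun x : ℝ => x ∈ Set.Ioc (0:ℝ) 1)).prodMap
        (Topology.IsEmbedding.id (X := ℝ))
      exact this.toIsInducing
    calc comap PhiAux (𝓝 (PhiAux q))
        ≤ comap PhiAux (comap GAux (𝓝 (GAux (PhiAux q)))) :=
          comap_mono (tendsto_iff_comap.1 (GAux_contAt q))
      _ = comap (GAux ∘ PhiAux) (𝓝 (GAux (PhiAux q))) := Filter.comap_comap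
      _ = comap (fun q : Set.Ioc (0 : ℝ) 1 × ℝ => ((q.1 : ℝ), q.2))
            (𝓝 ((q.1 : ℝ), q.2)) := by
          rw [GAux_comp]
          congr 1
          funext x
          exact GAux_comp x
      _ = 𝓝 q := (hι.nhds_eq_comap q).symm

/-- The map `Φ : (0,1] × ℝ → (ℤ[X] → ℝ)`, `Φ(υ,t)(P) = |P(t)|^υ`, is injective, continuous,
and a topological embedding (a homeomorphism onto its image), where `ℤ[X] → ℝ` carries the
topology of pointwise convergence. -/
theorem embedding_R_upsilon_family :
    Function.Injective
        (fun q : Set.Ioc (0 : ℝ) 1 × ℝ =>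
          fun P : Polynomial ℤ => |(Polynomial.aeval q.2 P : ℝ)| ^ (q.1 : ℝ)) ∧
      Continuous
        (fun q : Set.Ioc (0 : ℝ) 1 × ℝ =>
          fun P : Polynomial ℤ => |(Polynomial.aeval q.2 P : ℝ)| ^ (q.1 : ℝ)) ∧
      Topology.IsEmbedding
        (fun q : Set.Ioc (0 : ℝ) 1 × ℝ =>
          fun P : Polynomial ℤ => |(Polynomial.aeval q.2 P : ℝ)| ^ (q.1 : ℝ)) := by
  exact ⟨phiAux_inj, phiAux_cont, phiAux_emb⟩
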